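/- For any d > 0 and 0 ≤ j < 2^d, the set g_d^{-1}({0,...,j}) maximizes the number of induced edges of Q^d among all vertex subsets of size j+1; i.e., |I_{Q^d}(g_d^{-1}(0:j))| = I_{Q^d}(j+1). -/

import Mathlib

/-- The binary-reflected Gray code list for `d` bits: the list for `d` bits is obtained
from the list for `d-1` bits by prefixing the original list with `false` and the
reversed list with `true`, then concatenating. -/
def grayList : (d : ℕ) → List (Fin d → Bool)
  | 0 => [fun i => i.elim0]
  | d + 1 => (grayList d).map (Fin.cons false) ++ (grayList d).reverse.map (Fin.cons true)

/-- `grayIdx d w` is the position of the string `w` in the binary-reflected Gray code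
list for `d` bits (the Gray code value `g_d(w)`). -/
def grayIdx (d : ℕ) (w : Fin d → Bool) : ℕ := (grayList d).idxOf w

/-- The hypercube graph `Q^d` on `{0,1}^d`: two strings are adjacent iff they differ
in exactly one coordinate. -/
def Q (d : ℕ) : SimpleGraph (Fin d → Bool) where
  Adj x y := hammingDist x y = 1
  symm := by constructor; intro x y h; rwa [hammingDist_comm]
  loopless := by constructor; intro x h; simp [hammingDist_self] at h

/-- The set `I_G(A)` of edges of `G` with both endpoints in `A`. -/
def inducedEdges {α : Type*} (G : SimpleGraph α) (A : Set α) : Set (Sym2 α) :=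
  {e | e ∈ G.edgeSet ∧ ∀ v ∈ e, v ∈ A}

/-- The number of edges of `G` with both endpoints in `A`. -/
noncomputable def inducedCount {α : Type*} (G : SimpleGraph α) (A : Set α) : ℕ :=
  (inducedEdges G A).ncard

/-- `maxInduced G k` : the maximum number of induced edges over vertex sets of size `k`. -/
noncomputable def maxInduced {α : Type*} (G : SimpleGraph α) (k : ℕ) : ℕ :=
  sSup {n | ∃ A : Set α, A.ncard = k ∧ inducedCount G A = n}

/-- A vertex set is optimal if it maximizes the number of induced edges among sets
of its cardinality. -/
def IsOptimal {α : Type*} (G : SimpleGraph α) (A : Set α) : Prop :=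
  inducedCount G A = maxInduced G A.ncard


/-- The exact maximum number of edges induced by a `k`-set in a hypercube. -/
def mBound (n : ℕ) : ℕ :=
  if _h : n ≤ 1 then 0
  else if _h2 : n % 2 = 0 then 2 * mBound (n / 2) + n / 2
  else mBound (n / 2) + mBound (n / 2 + 1) + n / 2
decreasing_by all_goals omega

lemma mBound_zero : mBound 0 = 0 := by rw [mBound]; simp
lemma mBound_one : mBound 1 = 0 := by rw [mBound]; simp

lemma mBound_two_mul (k : ℕ) : mBound (2 * k) = 2 * mBound k + k := by
  rcases Nat.eq_zero_or_pos k with rfl | hk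
  · simp [mBound_zero]
  · rw [mBound, dif_neg (by omega), dif_pos (by omega)]
    have : 2 * k / 2 = k := by omega
    rw [this]

lemma mBound_odd (k : ℕ) : mBound (2 * k + 1) = mBound k + mBound (k + 1) + k := by
  rcases Nat.eq_zero_or_pos k with rfl | hk
  · simp [mBound_zero, mBound_one]
  · rw [mBound, dif_neg (by omega), dif_neg (by omega)]
    have : (2 * k + 1) / 2 = k := by omega
    rw [this]

lemma mBound_add_min' : ∀ n a b : ℕ, a + b ≤ n → a ≤ b →
    mBound a + mBound b + a ≤ mBound (a + b) := by
  intro n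
  induction n with
  | zero =>
    intro a b h _
    have ha : a = 0 := by omega
    have hb : b = 0 := by omega
    subst ha; subst hb; simp [mBound_zero]
  | succ n ih =>
    intro a b hab hle
    rcases Nat.eq_zero_or_pos a with rfl | hpos
    · simp [mBound_zero]
    rcases Nat.even_or_odd a with ⟨x, hx⟩ | ⟨x, hx⟩ <;>
      rcases Nat.even_or_odd b with ⟨y, hy⟩ | ⟨y, hy⟩
    · -- a = 2x, b = 2y
      have i1 := ih x y (by omega) (by omega)
      have g1 : mBound a = 2 * mBound x + x := by
        rw [show a = 2 * x by omega, mBound_two_mul]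
      have g2 : mBound b = 2 * mBound y + y := by
        rw [show b = 2 * y by omega, mBound_two_mul]
      have g3 : mBound (a + b) = 2 * mBound (x + y) + (x + y) := by
        rw [show a + b = 2 * (x + y) by omega, mBound_two_mul]
      omega
    · -- a = 2x, b = 2y+1
      have i1 := ih x y (by omega) (by omega)
      have i2 := ih x (y + 1) (by omega) (by omega)
      have g1 : mBound a = 2 * mBound x + x := by
        rw [show a = 2 * x by omega, mBound_two_mul]
      have g2 : mBound b = mBound y + mBound (y + 1) + y := by
        rw [show b = 2 * y + 1 by omega, mBound_odd]
      have g3 : mBound (a + b) = mBound (x + y) + mBound (x + (y + 1)) + (x + y) := by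
        rw [show a + b = 2 * (x + y) + 1 by omega, mBound_odd,
          show x + y + 1 = x + (y + 1) by omega]
      omega
    · -- a = 2x+1, b = 2y
      have i1 := ih x y (by omega) (by omega)
      have i2 := ih (x + 1) y (by omega) (by omega)
      have g1 : mBound a = mBound x + mBound (x + 1) + x := by
        rw [show a = 2 * x + 1 by omega, mBound_odd]
      have g2 : mBound b = 2 * mBound y + y := by
        rw [show b = 2 * y by omega, mBound_two_mul]
      have g3 : mBound (a + b) = mBound (x + y) + mBound ((x + 1) + y) + (x + y) := by
        rw [show a + b = 2 * (x + y) + 1 by omega, mBound_odd,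
          show x + y + 1 = (x + 1) + y by omega]
      omega
    · -- a = 2x+1, b = 2y+1
      have g1 : mBound a = mBound x + mBound (x + 1) + x := by
        rw [show a = 2 * x + 1 by omega, mBound_odd]
      have g2 : mBound b = mBound y + mBound (y + 1) + y := by
        rw [show b = 2 * y + 1 by omega, mBound_odd]
      have g3 : mBound (a + b) = 2 * mBound (x + (y + 1)) + (x + (y + 1)) := by
        rw [show a + b = 2 * (x + (y + 1)) by omega, mBound_two_mul]
      have i1 := ih x (y + 1) (by omega) (by omega)
      rcases le_or_gt (x + 1) y with hxy | hxy
      · have i2 := ih (x + 1) y (by omega) (by omega)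
        have e4 : (x + 1) + y = x + (y + 1) := by omega
        rw [e4] at i2
        omega
      · have hx1 : y = x := by omega
        subst hx1
        have i2 := ih y (y + 1) (by omega) (by omega)
        omega

lemma mBound_superadd (a b : ℕ) : mBound a + mBound b + min a b ≤ mBound (a + b) := by
  rcases le_total a b with h | h
  · have := mBound_add_min' (a + b) a b le_rfl h
    omega
  · have := mBound_add_min' (b + a) b a le_rfl h
    rw [Nat.add_comm b a] at this
    omega

lemma mBound_pow_add : ∀ d s : ℕ, s ≤ 2 ^ d →
    mBound (2 ^ d + s) = mBound (2 ^ d) + mBound s + s := by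
  intro d
  induction d with
  | zero =>
    intro s hs
    interval_cases s
    · simp [mBound_zero]
    · have g : mBound 2 = 1 := by
        rw [show (2 : ℕ) = 2 * 1 by norm_num, mBound_two_mul, mBound_one]
      simpa [mBound_one] using g
  | succ d ih =>
    intro s hs
    have hp : (2 : ℕ) ^ (d + 1) = 2 * 2 ^ d := by rw [pow_succ]; ring
    have gP : mBound (2 ^ (d + 1)) = 2 * mBound (2 ^ d) + 2 ^ d := by
      rw [hp, mBound_two_mul]
    rcases Nat.even_or_odd s with ⟨t, ht⟩ | ⟨t, ht⟩
    · have ht2 : t ≤ 2 ^ d := by omega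
      have g1 : mBound (2 ^ (d + 1) + s) = 2 * mBound (2 ^ d + t) + (2 ^ d + t) := by
        rw [show 2 ^ (d + 1) + s = 2 * (2 ^ d + t) by omega, mBound_two_mul]
      have g2 : mBound s = 2 * mBound t + t := by
        rw [show s = 2 * t by omega, mBound_two_mul]
      have g3 := ih t ht2
      omega
    · have ht2 : t + 1 ≤ 2 ^ d := by omega
      have g1 : mBound (2 ^ (d + 1) + s) = mBound (2 ^ d + t) + mBound (2 ^ d + (t + 1))
          + (2 ^ d + t) := by
        rw [show 2 ^ (d + 1) + s = 2 * (2 ^ d + t) + 1 by omega, mBound_odd,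
          show 2 ^ d + t + 1 = 2 ^ d + (t + 1) by omega]
      have g2 : mBound s = mBound t + mBound (t + 1) + t := by
        rw [show s = 2 * t + 1 by omega, mBound_odd]
      have g3 := ih t (by omega)
      have g4 := ih (t + 1) ht2
      omega


section counting

variable {α : Type*}

/-- The restriction of a graph to a vertex set (keeping other vertices as isolated). -/
def restrict (G : SimpleGraph α) (A : Set α) : SimpleGraph α where
  Adj x y := G.Adj x y ∧ x ∈ A ∧ y ∈ A
  symm := ⟨fun x y ⟨h, ha, hb⟩ => ⟨h.symm, hb, ha⟩⟩
  loopless := ⟨fun x ⟨h, _⟩ => G.loopless.irrefl x h⟩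

lemma inducedEdges_eq_edgeSet (G : SimpleGraph α) (A : Set α) :
    inducedEdges G A = (restrict G A).edgeSet := by
  ext e
  induction e using Sym2.ind with
  | _ x y =>
    simp only [inducedEdges, Set.mem_setOf_eq, SimpleGraph.mem_edgeSet]
    show (G.Adj x y ∧ ∀ v ∈ s(x, y), v ∈ A) ↔ (G.Adj x y ∧ x ∈ A ∧ y ∈ A)
    constructor
    · rintro ⟨h, hA⟩
      exact ⟨h, hA x (by simp), hA y (by simp)⟩
    · rintro ⟨h, hx, hy⟩
      refine ⟨h, ?_⟩
      intro v hv
      rcases Sym2.mem_iff.mp hv with rfl | rfl <;> assumption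

/-- Count of ordered adjacent pairs inside `A`. -/
noncomputable def pairCount (G : SimpleGraph α) (A : Set α) : ℕ :=
  {p : α × α | G.Adj p.1 p.2 ∧ p.1 ∈ A ∧ p.2 ∈ A}.ncard

lemma two_mul_inducedCount [Fintype α] (G : SimpleGraph α) (A : Set α) :
    2 * inducedCount G A = pairCount G A := by
  classical
  rw [inducedCount, inducedEdges_eq_edgeSet, pairCount]
  rw [Set.ncard_eq_toFinset_card' , Set.ncard_eq_toFinset_card']
  have h1 : (restrict G A).edgeSet.toFinset = (restrict G A).edgeFinset := rfl
  rw [h1, SimpleGraph.two_mul_card_edgeFinset]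
  congr 1
  ext ⟨x, y⟩
  simp [restrict]
  exact (@Finset.mem_filter _ _ (fun _ => Classical.propDecidable _) _ _).trans (by simp)

end counting

section cube

lemma hammingDist_cons {d : ℕ} (b c : Bool) (u v : Fin d → Bool) :
    hammingDist (Fin.cons b u : Fin (d + 1) → Bool) (Fin.cons c v) =
      (if b = c then 0 else 1) + hammingDist u v := by
  simp only [hammingDist, Finset.card_filter, Fin.sum_univ_succ, Fin.cons_zero, Fin.cons_succ]
  by_cases h : b = c <;> simp [h]

lemma Q_succ_adj {d : ℕ} (b c : Bool) (u v : Fin d → Bool) :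
    (Q (d + 1)).Adj (Fin.cons b u) (Fin.cons c v) ↔
      (b = c ∧ (Q d).Adj u v) ∨ (b ≠ c ∧ u = v) := by
  show hammingDist _ _ = 1 ↔ _
  rw [hammingDist_cons]
  show _ ↔ (b = c ∧ hammingDist u v = 1) ∨ _
  by_cases h : b = c
  · simp [h]
  · simp only [h, if_false, ne_eq, not_false_iff, true_and, false_and, false_or,
      ← hammingDist_eq_zero]
    omega

lemma inducedCount_Q0 (A : Set (Fin 0 → Bool)) : inducedCount (Q 0) A = 0 := by
  have h : inducedEdges (Q 0) A = ∅ := by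
    ext e
    induction e using Sym2.ind with
    | _ x y =>
      simp only [inducedEdges, Set.mem_setOf_eq, SimpleGraph.mem_edgeSet, Set.mem_empty_iff_false,
        iff_false, not_and]
      intro h
      exact absurd h (by
        have hxy : x = y := funext fun i => i.elim0
        rw [hxy]
        exact (Q 0).loopless.irrefl y)
  rw [inducedCount, h]
  simp

end cube

section split

variable {d : ℕ}

lemma exists_cons_eq (x : Fin (d + 1) → Bool) : ∃ b u, x = Fin.cons b u :=
  ⟨x 0, Fin.tail x, (Fin.cons_self_tail x).symm⟩

lemma consInj (b : Bool) :
    Function.Injective (fun u : Fin d → Bool => (Fin.cons b u : Fin (d + 1) → Bool)) :=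
  fun u v h => by
    have := congrFun h
    funext i
    have hi := congrFun h i.succ
    simpa [Fin.cons_succ] using hi

lemma ncard_split (A : Set (Fin (d + 1) → Bool)) :
    A.ncard = {u | (Fin.cons false u : Fin (d + 1) → Bool) ∈ A}.ncard
      + {u | (Fin.cons true u : Fin (d + 1) → Bool) ∈ A}.ncard := by
  classical
  have hdecomp : A =
      (fun u => (Fin.cons false u : Fin (d + 1) → Bool)) ''
          {u | (Fin.cons false u : Fin (d + 1) → Bool) ∈ A} ∪
        (fun u => (Fin.cons true u : Fin (d + 1) → Bool)) ''
          {u | (Fin.cons true u : Fin (d + 1) → Bool) ∈ A} := by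
    ext w
    constructor
    · intro hw
      obtain ⟨b, u, rfl⟩ := exists_cons_eq w
      cases b
      · exact Or.inl ⟨u, hw, rfl⟩
      · exact Or.inr ⟨u, hw, rfl⟩
    · rintro (⟨u, hu, rfl⟩ | ⟨u, hu, rfl⟩) <;> exact hu
  conv_lhs => rw [hdecomp]
  rw [Set.ncard_union_eq ?_ (Set.toFinite _) (Set.toFinite _),
    Set.ncard_image_of_injective _ (consInj false),
    Set.ncard_image_of_injective _ (consInj true)]
  rw [Set.disjoint_left]
  rintro w ⟨u, _, rfl⟩ ⟨v, _, hvw⟩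
  have := congrFun hvw 0
  simp [Fin.cons_zero] at this

def emb (b c : Bool) (p : (Fin d → Bool) × (Fin d → Bool)) :
    (Fin (d + 1) → Bool) × (Fin (d + 1) → Bool) := (Fin.cons b p.1, Fin.cons c p.2)

def diag (b : Bool) (u : Fin d → Bool) :
    (Fin (d + 1) → Bool) × (Fin (d + 1) → Bool) := (Fin.cons b u, Fin.cons (!b) u)

lemma embInj (b c : Bool) : Function.Injective (emb (d := d) b c) := by
  intro p q h
  simp only [emb, Prod.mk.injEq] at h
  exact Prod.ext (consInj b h.1) (consInj c h.2)

lemma diagInj (b : Bool) : Function.Injective (diag (d := d) b) := by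
  intro u v h
  simp only [diag, Prod.mk.injEq] at h
  exact consInj b h.1

def pairSet {α : Type*} (G : SimpleGraph α) (A : Set α) : Set (α × α) :=
  {p | G.Adj p.1 p.2 ∧ p.1 ∈ A ∧ p.2 ∈ A}

lemma pairCount_eq {α : Type*} (G : SimpleGraph α) (A : Set α) :
    pairCount G A = (pairSet G A).ncard := rfl

lemma pairSet_split (A : Set (Fin (d + 1) → Bool)) :
    pairSet (Q (d + 1)) A =
      (emb false false '' pairSet (Q d) {u | Fin.cons false u ∈ A} ∪
        emb true true '' pairSet (Q d) {u | Fin.cons true u ∈ A}) ∪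
      (diag false '' ({u | Fin.cons false u ∈ A} ∩ {u | Fin.cons true u ∈ A}) ∪
        diag true '' ({u | Fin.cons false u ∈ A} ∩ {u | Fin.cons true u ∈ A})) := by
  ext p
  obtain ⟨x, y⟩ := p
  constructor
  · rintro ⟨hadj, hx, hy⟩
    obtain ⟨b, u, rfl⟩ := exists_cons_eq x
    obtain ⟨c, v, rfl⟩ := exists_cons_eq y
    rw [Q_succ_adj] at hadj
    rcases hadj with ⟨rfl, huv⟩ | ⟨hbc, rfl⟩
    · cases b
      · exact Or.inl (Or.inl ⟨(u, v), ⟨huv, hx, hy⟩, rfl⟩)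
      · exact Or.inl (Or.inr ⟨(u, v), ⟨huv, hx, hy⟩, rfl⟩)
    · cases b <;> cases c <;> simp only [ne_eq, not_true_eq_false] at hbc
      · exact Or.inr (Or.inl ⟨u, ⟨hx, hy⟩, rfl⟩)
      · exact Or.inr (Or.inr ⟨u, ⟨hy, hx⟩, rfl⟩)
  · rintro ((⟨⟨u, v⟩, ⟨hadj, hu, hv⟩, hp⟩ | ⟨⟨u, v⟩, ⟨hadj, hu, hv⟩, hp⟩) |
      (⟨u, ⟨hu, hv⟩, hp⟩ | ⟨u, ⟨hu, hv⟩, hp⟩)) <;>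
    · injection hp with h1 h2
      subst h1
      subst h2
      refine ⟨by rw [Q_succ_adj]; first
        | exact Or.inl ⟨rfl, hadj⟩
        | exact Or.inr ⟨by simp, rfl⟩, ?_, ?_⟩ <;>
      first
        | exact hu
        | exact hv

lemma pairCount_split (A : Set (Fin (d + 1) → Bool)) :
    pairCount (Q (d + 1)) A =
      pairCount (Q d) {u | Fin.cons false u ∈ A}
      + pairCount (Q d) {u | Fin.cons true u ∈ A}
      + 2 * ({u | Fin.cons false u ∈ A} ∩ {u | Fin.cons true u ∈ A}).ncard := by
  classical
  rw [pairCount_eq, pairSet_split]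
  have d1 : Disjoint
      (emb false false '' pairSet (Q d) {u | Fin.cons false u ∈ A})
      (emb true true '' pairSet (Q d) {u | Fin.cons true u ∈ A}) := by
    rw [Set.disjoint_left]
    rintro p ⟨q, _, rfl⟩ ⟨r, _, hr⟩
    have := congrFun (congrArg Prod.fst hr) 0
    simp [emb, Fin.cons_zero] at this
  have d2 : Disjoint
      (diag false '' ({u | Fin.cons false u ∈ A} ∩ {u | Fin.cons true u ∈ A}))
      (diag true '' ({u | Fin.cons false u ∈ A} ∩ {u | Fin.cons true u ∈ A})) := by
    rw [Set.disjoint_left]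
    rintro p ⟨q, _, rfl⟩ ⟨r, _, hr⟩
    have := congrFun (congrArg Prod.fst hr) 0
    simp [diag, Fin.cons_zero] at this
  have d3 : Disjoint
      (emb false false '' pairSet (Q d) {u | Fin.cons false u ∈ A} ∪
        emb true true '' pairSet (Q d) {u | Fin.cons true u ∈ A})
      (diag false '' ({u | Fin.cons false u ∈ A} ∩ {u | Fin.cons true u ∈ A}) ∪
        diag true '' ({u | Fin.cons false u ∈ A} ∩ {u | Fin.cons true u ∈ A})) := by
    rw [Set.disjoint_left]
    rintro p (⟨q, _, rfl⟩ | ⟨q, _, rfl⟩) (⟨r, _, hr⟩ | ⟨r, _, hr⟩) <;>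
    · have h1 := congrFun (congrArg Prod.fst hr) 0
      have h2 := congrFun (congrArg Prod.snd hr) 0
      simp [emb, diag, Fin.cons_zero] at h1 h2
      try exact absurd (h1.symm.trans h2) (by simp)
      try simp_all
  rw [Set.ncard_union_eq d3 (Set.toFinite _) (Set.toFinite _),
    Set.ncard_union_eq d1 (Set.toFinite _) (Set.toFinite _),
    Set.ncard_union_eq d2 (Set.toFinite _) (Set.toFinite _),
    Set.ncard_image_of_injective _ (embInj false false),
    Set.ncard_image_of_injective _ (embInj true true),
    Set.ncard_image_of_injective _ (diagInj false),
    Set.ncard_image_of_injective _ (diagInj true),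
    pairCount_eq, pairCount_eq]
  ring

end split

section auto

lemma pairSet_image {α : Type*} (G : SimpleGraph α) (f : α → α)
    (hadj : ∀ x y, G.Adj (f x) (f y) ↔ G.Adj x y) (A : Set α) :
    pairSet G (f '' A) = Prod.map f f '' pairSet G A := by
  ext p
  constructor
  · rintro ⟨hA, ⟨u, hu, hu'⟩, ⟨v, hv, hv'⟩⟩
    refine ⟨(u, v), ⟨?_, hu, hv⟩, ?_⟩
    · rw [← hadj]
      rw [show f u = p.1 from hu', show f v = p.2 from hv']
      exact hA
    · rw [Prod.map, hu', hv']
  · rintro ⟨⟨u, v⟩, ⟨h, hu, hv⟩, rfl⟩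
    exact ⟨(hadj u v).mpr h, ⟨u, hu, rfl⟩, ⟨v, hv, rfl⟩⟩

lemma pairCount_image {α : Type*} (G : SimpleGraph α) (f : α → α)
    (hinj : Function.Injective f) (hadj : ∀ x y, G.Adj (f x) (f y) ↔ G.Adj x y) (A : Set α) :
    pairCount G (f '' A) = pairCount G A := by
  rw [pairCount_eq, pairCount_eq, pairSet_image G f hadj,
    Set.ncard_image_of_injective _ (hinj.prodMap hinj)]

lemma inducedCount_image {d : ℕ} (f : (Fin d → Bool) → (Fin d → Bool))
    (hinj : Function.Injective f) (hadj : ∀ x y, (Q d).Adj (f x) (f y) ↔ (Q d).Adj x y)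
    (A : Set (Fin d → Bool)) : inducedCount (Q d) (f '' A) = inducedCount (Q d) A := by
  have h := pairCount_image (Q d) f hinj hadj A
  have h1 := two_mul_inducedCount (Q d) (f '' A)
  have h2 := two_mul_inducedCount (Q d) A
  omega

/-- Flip the first coordinate. -/
def flip0 {d : ℕ} (w : Fin (d + 1) → Bool) : Fin (d + 1) → Bool :=
  Fin.cons (!(w 0)) (Fin.tail w)

lemma flip0_cons {d : ℕ} (b : Bool) (u : Fin d → Bool) :
    flip0 (Fin.cons b u) = Fin.cons (!b) u := by
  simp [flip0, Fin.cons_zero, Fin.tail_cons]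

lemma flip0_flip0 {d : ℕ} (w : Fin (d + 1) → Bool) : flip0 (flip0 w) = w := by
  obtain ⟨b, u, rfl⟩ := exists_cons_eq w
  simp [flip0_cons]

lemma flip0_inj {d : ℕ} : Function.Injective (flip0 (d := d)) := by
  intro x y h
  rw [← flip0_flip0 x, h, flip0_flip0]

lemma flip0_adj {d : ℕ} (x y : Fin (d + 1) → Bool) :
    (Q (d + 1)).Adj (flip0 x) (flip0 y) ↔ (Q (d + 1)).Adj x y := by
  obtain ⟨b, u, rfl⟩ := exists_cons_eq x
  obtain ⟨c, v, rfl⟩ := exists_cons_eq y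
  rw [flip0_cons, flip0_cons, Q_succ_adj, Q_succ_adj]
  cases b <;> cases c <;> simp

end auto

section gray

lemma grayList_length (d : ℕ) : (grayList d).length = 2 ^ d := by
  induction d with
  | zero => rfl
  | succ d ih =>
    simp only [grayList, List.length_append, List.length_map, List.length_reverse, ih, pow_succ]
    ring

lemma grayList_mem (d : ℕ) (w : Fin d → Bool) : w ∈ grayList d := by
  induction d with
  | zero =>
    simp only [grayList, List.mem_singleton]
    funext i
    exact i.elim0
  | succ d ih =>
    obtain ⟨b, u, rfl⟩ := exists_cons_eq w
    rw [grayList, List.mem_append]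
    cases b
    · exact Or.inl (List.mem_map.mpr ⟨u, ih u, rfl⟩)
    · exact Or.inr (List.mem_map.mpr ⟨u, List.mem_reverse.mpr (ih u), rfl⟩)

lemma grayList_nodup (d : ℕ) : (grayList d).Nodup := by
  induction d with
  | zero => simp [grayList]
  | succ d ih =>
    rw [grayList]
    refine List.Nodup.append (ih.map (consInj false)) ((List.nodup_reverse.mpr ih).map (consInj true)) ?_
    intro a ha hb
    rcases List.mem_map.mp ha with ⟨u, _, rfl⟩
    rcases List.mem_map.mp hb with ⟨v, _, hv⟩
    have := congrFun hv 0
    simp [Fin.cons_zero] at this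

lemma indexOf_map_inj {α β : Type*} [DecidableEq α] [DecidableEq β] (f : α → β)
    (hf : Function.Injective f) (l : List α) (a : α) :
    (l.map f).idxOf (f a) = l.idxOf a := by
  induction l with
  | nil => simp
  | cons b t ih =>
    by_cases h : b = a
    · subst h
      simp [List.idxOf_cons_self]
    · rw [List.map_cons, List.idxOf_cons_ne _ (fun hc => h (hf hc)),
        List.idxOf_cons_ne _ h, ih]

lemma grayIdx_lt (d : ℕ) (w : Fin d → Bool) : grayIdx d w < 2 ^ d := by
  rw [grayIdx, ← grayList_length d]
  exact List.idxOf_lt_length_iff.mpr (grayList_mem d w)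

lemma grayIdx_cons_false (d : ℕ) (u : Fin d → Bool) :
    grayIdx (d + 1) (Fin.cons false u) = grayIdx d u := by
  rw [grayIdx, grayList,
    List.idxOf_append_of_mem (List.mem_map.mpr ⟨u, grayList_mem d u, rfl⟩)]
  exact indexOf_map_inj _ (consInj false) _ u

lemma grayIdx_cons_true (d : ℕ) (u : Fin d → Bool) :
    grayIdx (d + 1) (Fin.cons true u) = 2 ^ d + (grayList d).reverse.idxOf u := by
  rw [grayIdx, grayList, List.idxOf_append_of_notMem ?h, List.length_map, grayList_length,
    indexOf_map_inj _ (consInj true) _ u]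
  case h =>
    intro hmem
    rcases List.mem_map.mp hmem with ⟨v, _, hv⟩
    have := congrFun hv 0
    simp [Fin.cons_zero] at this

lemma indexOf_reverse_add {α : Type*} [DecidableEq α] :
    ∀ l : List α, l.Nodup → ∀ a ∈ l, l.reverse.idxOf a + l.idxOf a + 1 = l.length := by
  intro l
  induction l with
  | nil => intro _ a ha; simp at ha
  | cons b t ih =>
    intro hnd a ha
    have hbt : b ∉ t := (List.nodup_cons.mp hnd).1
    have hnt : t.Nodup := (List.nodup_cons.mp hnd).2
    rw [List.reverse_cons]
    rcases List.mem_cons.mp ha with rfl | hat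
    · rw [List.idxOf_cons_self,
        List.idxOf_append_of_notMem (by rwa [List.mem_reverse]),
        List.idxOf_cons_self, List.length_reverse]
      simp
    · have hab : b ≠ a := fun h => hbt (h ▸ hat)
      rw [List.idxOf_cons_ne _ hab,
        List.idxOf_append_of_mem (List.mem_reverse.mpr hat)]
      have := ih hnt a hat
      simp only [List.length_cons]
      omega

lemma grayList_reverse (d : ℕ) :
    (grayList (d + 1)).reverse = (grayList (d + 1)).map flip0 := by
  rw [grayList]
  simp [List.reverse_append, List.map_map, List.map_reverse, Function.comp_def, flip0_cons]

lemma grayIdx_flip0 (d : ℕ) (u : Fin (d + 1) → Bool) :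
    grayIdx (d + 1) (flip0 u) = (grayList (d + 1)).reverse.idxOf u := by
  have h := indexOf_map_inj flip0 flip0_inj (grayList (d + 1)) (flip0 u)
  rw [flip0_flip0] at h
  rw [grayIdx, ← h, grayList_reverse]

lemma grayIdx_rev (d : ℕ) (u : Fin d → Bool) :
    (grayList d).reverse.idxOf u + grayIdx d u + 1 = 2 ^ d := by
  rw [← grayList_length d]
  exact indexOf_reverse_add (grayList d) (grayList_nodup d) u (grayList_mem d u)

lemma grayIdx_def (d : ℕ) (w : Fin d → Bool) : grayIdx d w = (grayList d).idxOf w := rfl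

lemma ncard_gray_prefix (d j : ℕ) (hj : j ≤ 2 ^ d) : {w | grayIdx d w < j}.ncard = j := by
  classical
  have key : (Finset.univ.filter fun w => grayIdx d w < j).card = (Finset.range j).card := by
    refine Finset.card_bij' (fun w _ => grayIdx d w)
      (fun i hi => (grayList d).get ⟨i, by
        rw [grayList_length]; exact lt_of_lt_of_le (Finset.mem_range.mp hi) hj⟩) ?_ ?_ ?_ ?_
    · intro w hw
      simp only [Finset.mem_filter] at hw
      exact Finset.mem_range.mpr hw.2
    · intro i hi
      simp only [Finset.mem_filter, Finset.mem_univ, true_and]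
      rw [grayIdx_def, List.get_eq_getElem, (grayList_nodup d).idxOf_getElem i _]
      exact Finset.mem_range.mp hi
    · intro w hw
      exact List.idxOf_get _
    · intro i hi
      simp only [grayIdx_def, List.get_eq_getElem]
      exact (grayList_nodup d).idxOf_getElem i _
  rw [Set.ncard_eq_toFinset_card', Set.toFinset_setOf, key, Finset.card_range]

lemma card_cube (d : ℕ) : (Set.univ : Set (Fin d → Bool)).ncard = 2 ^ d := by
  rw [Set.ncard_univ, Nat.card_eq_fintype_card, Fintype.card_fun]
  simp

lemma gray_prefix_full (d : ℕ) : {w | grayIdx d w < 2 ^ d} = Set.univ := by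
  ext w
  simp [grayIdx_lt]

lemma ncard_gray_suffix (d s : ℕ) (hs : s ≤ 2 ^ d) :
    {u | 2 ^ d ≤ grayIdx d u + s}.ncard = s := by
  have hc : {u | 2 ^ d ≤ grayIdx d u + s} = {u | grayIdx d u < 2 ^ d - s}ᶜ := by
    ext u
    have := grayIdx_lt d u
    simp only [Set.mem_setOf_eq, Set.mem_compl_iff, not_lt]
    omega
  have h2 := Set.ncard_add_ncard_compl {u | grayIdx d u < 2 ^ d - s}
  have h3 : Nat.card (Fin d → Bool) = 2 ^ d := by
    rw [Nat.card_eq_fintype_card, Fintype.card_fun]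
    simp
  rw [hc]
  rw [ncard_gray_prefix d (2 ^ d - s) (by omega), h3] at h2
  omega

end gray

section main

lemma pairCount_empty {α : Type*} (G : SimpleGraph α) : pairCount G (∅ : Set α) = 0 := by
  rw [pairCount_eq]
  have : pairSet G (∅ : Set α) = ∅ := by
    ext p
    simp [pairSet]
  rw [this, Set.ncard_empty]

lemma inducedCount_le : ∀ d (A : Set (Fin d → Bool)),
    inducedCount (Q d) A ≤ mBound A.ncard := by
  intro d
  induction d with
  | zero => intro A; rw [inducedCount_Q0]; exact Nat.zero_le _
  | succ d ih =>
    intro A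
    have h1 := two_mul_inducedCount (Q (d + 1)) A
    have h2 := pairCount_split A
    have h3 := two_mul_inducedCount (Q d) {u | Fin.cons false u ∈ A}
    have h4 := two_mul_inducedCount (Q d) {u | Fin.cons true u ∈ A}
    have h5 := ih {u | Fin.cons false u ∈ A}
    have h6 := ih {u | Fin.cons true u ∈ A}
    have h7 := ncard_split A
    have h8a : ({u | Fin.cons false u ∈ A} ∩ {u | Fin.cons true u ∈ A}).ncard ≤
        {u | Fin.cons false u ∈ A}.ncard :=
      Set.ncard_le_ncard Set.inter_subset_left (Set.toFinite _)
    have h8b : ({u | Fin.cons false u ∈ A} ∩ {u | Fin.cons true u ∈ A}).ncard ≤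
        {u | Fin.cons true u ∈ A}.ncard :=
      Set.ncard_le_ncard Set.inter_subset_right (Set.toFinite _)
    have h9 := mBound_superadd {u | Fin.cons false u ∈ A}.ncard {u | Fin.cons true u ∈ A}.ncard
    rw [h7]
    omega

lemma gray_prefix_count : ∀ d k, 1 ≤ k → k ≤ 2 ^ d →
    inducedCount (Q d) {w | grayIdx d w < k} = mBound k := by
  intro d
  induction d with
  | zero =>
    intro k h1 h2
    have hk : k = 1 := by norm_num at h2; omega
    subst hk
    rw [inducedCount_Q0, mBound_one]
  | succ d ih =>
    intro k hk1 hk2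
    have hsuf : ∀ s, 1 ≤ s → s ≤ 2 ^ d →
        inducedCount (Q d) {u | 2 ^ d ≤ grayIdx d u + s} = mBound s := by
      intro s hs1 hs2
      cases d with
      | zero =>
        have hs : s = 1 := by norm_num at hs2; omega
        subst hs
        rw [inducedCount_Q0, mBound_one]
      | succ e =>
        have hset : {u | 2 ^ (e + 1) ≤ grayIdx (e + 1) u + s} =
            flip0 '' {w | grayIdx (e + 1) w < s} := by
          ext u
          constructor
          · intro hu
            refine ⟨flip0 u, ?_, flip0_flip0 u⟩
            have h1 := grayIdx_flip0 e u
            have h2 := grayIdx_rev (e + 1) u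
            simp only [Set.mem_setOf_eq] at hu ⊢
            omega
          · rintro ⟨w, hw, rfl⟩
            have h1 := grayIdx_flip0 e w
            have h2 := grayIdx_rev (e + 1) w
            simp only [Set.mem_setOf_eq] at hw ⊢
            omega
        rw [hset, inducedCount_image flip0 flip0_inj flip0_adj, ih s hs1 hs2]
    rcases le_or_gt k (2 ^ d) with hk | hk
    · -- k in first half
      have hA0 : {u | (Fin.cons false u : Fin (d + 1) → Bool) ∈ {w | grayIdx (d + 1) w < k}} =
          {u | grayIdx d u < k} := by
        ext u
        simp [grayIdx_cons_false]
      have hA1 : {u | (Fin.cons true u : Fin (d + 1) → Bool) ∈ {w | grayIdx (d + 1) w < k}} =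
          (∅ : Set (Fin d → Bool)) := by
        ext u
        simp only [Set.mem_setOf_eq, grayIdx_cons_true, Set.mem_empty_iff_false, iff_false,
          not_lt]
        omega
      have h1 := two_mul_inducedCount (Q (d + 1)) {w | grayIdx (d + 1) w < k}
      have h2 := pairCount_split {w | grayIdx (d + 1) w < k}
      rw [hA0, hA1, Set.inter_empty, Set.ncard_empty, pairCount_empty] at h2
      have h3 := two_mul_inducedCount (Q d) {u | grayIdx d u < k}
      have h6 := ih k hk1 hk
      omega
    · -- k in second half
      have hs1 : 1 ≤ k - 2 ^ d := by omega
      have hs2 : k - 2 ^ d ≤ 2 ^ d := by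
        have : (2 : ℕ) ^ (d + 1) = 2 * 2 ^ d := by rw [pow_succ]; ring
        omega
      have hA0 : {u | (Fin.cons false u : Fin (d + 1) → Bool) ∈ {w | grayIdx (d + 1) w < k}} =
          {u | grayIdx d u < 2 ^ d} := by
        ext u
        have := grayIdx_lt d u
        simp only [Set.mem_setOf_eq, grayIdx_cons_false]
        omega
      have hA1 : {u | (Fin.cons true u : Fin (d + 1) → Bool) ∈ {w | grayIdx (d + 1) w < k}} =
          {u | 2 ^ d ≤ grayIdx d u + (k - 2 ^ d)} := by
        ext u
        have h2 := grayIdx_rev d u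
        simp only [Set.mem_setOf_eq, grayIdx_cons_true]
        omega
      have hcross : {u | grayIdx d u < 2 ^ d} ∩ {u | 2 ^ d ≤ grayIdx d u + (k - 2 ^ d)} =
          {u | 2 ^ d ≤ grayIdx d u + (k - 2 ^ d)} := by
        apply Set.inter_eq_self_of_subset_right
        intro u _
        exact grayIdx_lt d u
      have h1 := two_mul_inducedCount (Q (d + 1)) {w | grayIdx (d + 1) w < k}
      have h2 := pairCount_split {w | grayIdx (d + 1) w < k}
      rw [hA0, hA1, hcross, ncard_gray_suffix d (k - 2 ^ d) hs2] at h2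
      have h3 := two_mul_inducedCount (Q d) {u | grayIdx d u < 2 ^ d}
      have h4 := two_mul_inducedCount (Q d) {u | 2 ^ d ≤ grayIdx d u + (k - 2 ^ d)}
      have h5 := ih (2 ^ d) (Nat.one_le_two_pow) le_rfl
      have h6 := hsuf (k - 2 ^ d) hs1 hs2
      have h7 := mBound_pow_add d (k - 2 ^ d) hs2
      have h8 : 2 ^ d + (k - 2 ^ d) = k := by omega
      rw [h8] at h7
      omega

lemma maxInduced_eq (d k : ℕ) (hk1 : 1 ≤ k) (hk2 : k ≤ 2 ^ d) :
    maxInduced (Q d) k = mBound k := by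
  have hub : ∀ n ∈ {n | ∃ A : Set (Fin d → Bool), A.ncard = k ∧ inducedCount (Q d) A = n},
      n ≤ mBound k := by
    rintro n ⟨A, hA, rfl⟩
    have := inducedCount_le d A
    rwa [hA] at this
  have hmem : mBound k ∈
      {n | ∃ A : Set (Fin d → Bool), A.ncard = k ∧ inducedCount (Q d) A = n} :=
    ⟨{w | grayIdx d w < k}, ncard_gray_prefix d k hk2, gray_prefix_count d k hk1 hk2⟩
  apply le_antisymm
  · exact csSup_le ⟨mBound k, hmem⟩ hub
  · exact le_csSup ⟨mBound k, hub⟩ hmem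

end main


/-- For any `d > 0` and `0 ≤ j < 2^d`, the set `g_d⁻¹({0, …, j})` maximizes the
number of induced edges of `Q^d` among all vertex subsets of size `j+1`. -/
theorem gray_initial_segment_optimal (d : ℕ) (hd : 0 < d) (j : ℕ) (hj : j < 2 ^ d) :
    inducedCount (Q d) {w | grayIdx d w ≤ j} = maxInduced (Q d) (j + 1) := by
  have hset : {w | grayIdx d w ≤ j} = {w | grayIdx d w < j + 1} := by
    ext w
    simp [Nat.lt_succ_iff]
  rw [hset, gray_prefix_count d (j + 1) (by omega) (by omega),
    maxInduced_eq d (j + 1) (by omega) (by omega)]
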